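/- There exist absolute constants C > 0 and C' > 0 such that the following holds for all positive integers d, k, n and all m ≥ 2. Let x_1,…,x_n ∈ ℝ^d have ‖x_i‖₂ = 1 and let y_1,…,y_n ∈ ℝ^k. Let V be a random k×m matrix with i.i.d. N(0, 1/k) entries. Then with probability at least 1 − C'/m over V, simultaneously for every hidden weight matrix W ∈ ℝ^{m×d} and every i ∈ {1,…,n}: ‖∇_W ℓ(f_{V,W}(x_i), y_i)‖_{2,∞}² ≤ C · ℓ(f_{V,W}(x_i), y_i) · log m. -/

import Mathlib

open MeasureTheory ProbabilityTheory NNReal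
open scoped ENNReal

/-- Output of the two-layer ReLU network `f_{V,W}(x) = V σ(W x)`. -/
noncomputable def netOut {d k m : ℕ} (V : Matrix (Fin k) (Fin m) ℝ)
    (W : Matrix (Fin m) (Fin d) ℝ) (x : Fin d → ℝ) : Fin k → ℝ :=
  V.mulVec fun j => max (W.mulVec x j) 0

/-- Squared-error loss `ℓ(f_{V,W}(x), y) = ½‖f_{V,W}(x) − y‖²`. -/
noncomputable def netLoss {d k m : ℕ} (V : Matrix (Fin k) (Fin m) ℝ)
    (W : Matrix (Fin m) (Fin d) ℝ) (x : Fin d → ℝ) (y : Fin k → ℝ) : ℝ :=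
  (1 / 2) * ∑ r, (netOut V W x r - y r) ^ 2

/-- The (formal) gradient `∇_W ℓ(f_{V,W}(x), y)`: its `j`-th row is
`⟨f_{V,W}(x) − y, v_j⟩ · 1{⟨w_j, x⟩ ≥ 0} · xᵀ`. -/
noncomputable def netGrad {d k m : ℕ} (V : Matrix (Fin k) (Fin m) ℝ)
    (W : Matrix (Fin m) (Fin d) ℝ) (x : Fin d → ℝ) (y : Fin k → ℝ) :
    Matrix (Fin m) (Fin d) ℝ :=
  Matrix.of fun j p =>
    (∑ r, (netOut V W x r - y r) * V r j) * (if 0 ≤ W.mulVec x j then 1 else 0) * x p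

theorem lintegral_fin_pi_prod : ∀ {n : ℕ} {α : Fin n → Type} [∀ i, MeasurableSpace (α i)]
    (μ : ∀ i, Measure (α i)) [∀ i, SigmaFinite (μ i)] (f : ∀ i, α i → ℝ≥0∞),
    (∀ i, Measurable (f i)) →
    ∫⁻ x, ∏ i, f i (x i) ∂Measure.pi μ = ∏ i, ∫⁻ y, f i y ∂μ i := by
  intro n
  induction n with
  | zero =>
    intro α _ μ _ f hf
    simp [Measure.pi_of_empty]
  | succ n ih =>
    intro α _ μ _ f hf
    have A := (measurePreserving_piFinSuccAbove μ 0).symm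
    have hF : Measurable fun x : ∀ i, α i => ∏ i, f i (x i) :=
      Finset.measurable_prod _ fun i _ => (hf i).comp (measurable_pi_apply i)
    rw [← A.lintegral_comp hF]
    have key : ∀ z : α 0 × (∀ i : Fin n, α (Fin.succAbove 0 i)),
        (∏ i, f i ((MeasurableEquiv.piFinSuccAbove α 0).symm z i)) =
          f 0 z.1 * ∏ i : Fin n, f (Fin.succAbove 0 i) (z.2 i) := by
      intro z
      rw [Fin.prod_univ_succAbove _ 0]
      simp [MeasurableEquiv.piFinSuccAbove]
      rfl
    simp_rw [key]
    have hg : Measurable fun x : ∀ i : Fin n, α (Fin.succAbove 0 i) =>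
        ∏ i, f (Fin.succAbove 0 i) (x i) :=
      Finset.measurable_prod _ fun i _ => (hf _).comp (measurable_pi_apply i)
    rw [lintegral_prod_mul (hf 0).aemeasurable hg.aemeasurable,
      ih _ _ (fun i => hf _), Fin.prod_univ_succ]
    simp [Fin.zero_succAbove]
    rfl

open Real in
lemma lintegral_exp_quarter_sq_gaussian {k : ℕ} (hk : 0 < k) :
    ∫⁻ x : ℝ, ENNReal.ofReal (Real.exp ((k / 4 : ℝ) * x ^ 2)) ∂gaussianReal 0 (1 / (k : ℝ≥0))
      = ENNReal.ofReal (Real.sqrt 2) := by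
  have hk' : (0 : ℝ) < k := by exact_mod_cast hk
  have hv : (1 / (k : ℝ≥0)) ≠ 0 := by
    positivity
  have hvr : ((1 / (k : ℝ≥0) : ℝ≥0) : ℝ) = 1 / k := by
    push_cast
    ring
  rw [gaussianReal_of_var_ne_zero _ hv]
  rw [lintegral_withDensity_eq_lintegral_mul _ (measurable_gaussianPDF _ _)
    (by fun_prop : Measurable fun x : ℝ => ENNReal.ofReal (Real.exp ((k / 4 : ℝ) * x ^ 2)))]
  have hpt : ∀ x : ℝ, (gaussianPDF 0 (1 / (k : ℝ≥0)) * fun x =>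
      ENNReal.ofReal (Real.exp ((k / 4 : ℝ) * x ^ 2))) x =
      ENNReal.ofReal ((Real.sqrt (2 * π * (1 / k)))⁻¹ * Real.exp (-(k / 4 : ℝ) * x ^ 2)) := by
    intro x
    simp only [Pi.mul_apply, gaussianPDF, gaussianPDFReal, hvr]
    rw [← ENNReal.ofReal_mul (by positivity)]
    congr 1
    rw [mul_assoc, ← Real.exp_add]
    congr 2
    field_simp
    ring
  simp_rw [hpt]
  rw [← ofReal_integral_eq_lintegral_ofReal
    ((integrable_exp_neg_mul_sq (by positivity : (0:ℝ) < k / 4)).const_mul _)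
    (Filter.Eventually.of_forall fun x => by positivity)]
  rw [MeasureTheory.integral_const_mul, integral_gaussian]
  congr 1
  rw [← Real.sqrt_inv, ← Real.sqrt_mul (by positivity)]
  congr 1
  have hπ := Real.pi_pos
  field_simp
  ring

lemma chernoff_col {k m : ℕ} (hk : 0 < k) (j : Fin m) {a : ℝ} (ha : 4 ≤ a) :
    (Measure.pi fun _ : Fin k => Measure.pi fun _ : Fin m => gaussianReal 0 (1 / (k : ℝ≥0)))
      {V : Fin k → Fin m → ℝ | a < ∑ r, (V r j) ^ 2} ≤ ENNReal.ofReal (Real.exp (-a / 8)) := by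
  have hk' : (1 : ℝ) ≤ k := by exact_mod_cast hk
  set γ : Measure ℝ := gaussianReal 0 (1 / (k : ℝ≥0)) with hγ
  set μ := Measure.pi fun _ : Fin k => Measure.pi fun _ : Fin m => γ with hμ
  set l : ℝ := (k : ℝ) / 4 with hl
  have hl0 : 0 < l := by positivity
  set g : ℝ → ℝ≥0∞ := fun u => ENNReal.ofReal (Real.exp (l * u ^ 2)) with hg
  have hgm : Measurable g := by fun_prop
  set S : (Fin k → Fin m → ℝ) → ℝ := fun V => ∑ r, (V r j) ^ 2 with hS
  have hSm : Measurable S :=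
    Finset.measurable_sum _ fun r _ =>
      (((measurable_pi_apply j).comp (measurable_pi_apply r)).pow_const 2)
  have hs : MeasurableSet {V : Fin k → Fin m → ℝ | a < S V} :=
    measurableSet_lt measurable_const hSm
  -- Chernoff step
  have step1 : μ {V | a < S V} ≤ ∫⁻ V, ENNReal.ofReal (Real.exp (l * (S V - a))) ∂μ := by
    rw [← lintegral_indicator_one hs]
    refine lintegral_mono fun V => ?_
    by_cases hV : V ∈ {V | a < S V}
    · rw [Set.indicator_of_mem hV]
      refine ENNReal.one_le_ofReal.mpr (Real.one_le_exp ?_)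
      have : 0 < S V - a := sub_pos.mpr hV
      positivity
    · rw [Set.indicator_of_notMem hV]
      exact zero_le
  -- factor the exponential
  have step2 : ∀ V : Fin k → Fin m → ℝ, ENNReal.ofReal (Real.exp (l * (S V - a))) =
      ENNReal.ofReal (Real.exp (-(l * a))) * ∏ r, g (V r j) := by
    intro V
    have h1 : l * (S V - a) = (∑ r, l * (V r j) ^ 2) + (-(l * a)) := by
      rw [hS, mul_sub, Finset.mul_sum]; ring
    rw [h1, Real.exp_add, Real.exp_sum, ENNReal.ofReal_mul (by positivity), mul_comm,
      ENNReal.ofReal_prod_of_nonneg (fun r _ => (Real.exp_pos _).le)]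
  -- compute the lintegral
  have inner : ∫⁻ row : Fin m → ℝ, g (row j) ∂(Measure.pi fun _ : Fin m => γ) =
      ENNReal.ofReal (Real.sqrt 2) := by
    have hfact : ∀ row : Fin m → ℝ, g (row j) =
        ∏ j' : Fin m, (fun j' u => if j' = j then g u else 1) j' (row j') := by
      intro row
      rw [Finset.prod_ite_eq' Finset.univ j (fun j' => g (row j'))]
      simp
    simp_rw [hfact]
    have hmeas : ∀ j' : Fin m, Measurable fun u : ℝ => if j' = j then g u else 1 := fun j' => by
      by_cases h : j' = j <;> simp [h, hgm, measurable_const]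
    have hprod := lintegral_fin_pi_prod (fun _ : Fin m => γ)
      (fun j' u => if j' = j then g u else 1) hmeas
    rw [hprod]
    have : ∀ j' : Fin m, ∫⁻ u, (if j' = j then g u else 1) ∂γ =
        (if j' = j then ENNReal.ofReal (Real.sqrt 2) else 1) := by
      intro j'
      by_cases h : j' = j
      · simp only [h, if_true]
        exact lintegral_exp_quarter_sq_gaussian hk
      · simp [h]
    simp_rw [this]
    rw [Finset.prod_ite_eq' Finset.univ j (fun _ => ENNReal.ofReal (Real.sqrt 2))]
    simp
  have step3 : ∫⁻ V, ENNReal.ofReal (Real.exp (l * (S V - a))) ∂μ =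
      ENNReal.ofReal (Real.exp (-(l * a))) * ENNReal.ofReal (Real.sqrt 2) ^ k := by
    simp_rw [step2]
    have hFm : Measurable fun V : Fin k → Fin m → ℝ => ∏ r, g (V r j) :=
      Finset.measurable_prod _ fun r _ =>
        hgm.comp ((measurable_pi_apply j).comp (measurable_pi_apply r))
    rw [lintegral_const_mul _ hFm]
    congr 1
    have hprod2 := lintegral_fin_pi_prod (fun _ : Fin k => Measure.pi fun _ : Fin m => γ)
      (fun _ row => g (row j)) (fun r => hgm.comp (measurable_pi_apply j))
    rw [hprod2]
    simp_rw [inner]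
    simp
  -- numeric bound
  have final : ENNReal.ofReal (Real.exp (-(l * a))) * ENNReal.ofReal (Real.sqrt 2) ^ k ≤
      ENNReal.ofReal (Real.exp (-a / 8)) := by
    rw [← ENNReal.ofReal_pow (Real.sqrt_nonneg 2), ← ENNReal.ofReal_mul (Real.exp_pos _).le]
    apply ENNReal.ofReal_le_ofReal
    have h2 : Real.sqrt 2 ^ k = Real.exp ((k : ℝ) * (Real.log 2 / 2)) := by
      rw [← Real.log_sqrt (by norm_num : (0:ℝ) ≤ 2), Real.exp_nat_mul, Real.exp_log
        (Real.sqrt_pos.mpr (by norm_num))]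
    rw [h2, ← Real.exp_add]
    apply Real.exp_le_exp.mpr
    have hlog := Real.log_two_lt_d9
    have h1 : (0:ℝ) ≤ (k:ℝ) - 1 := by linarith
    have h2' : (0:ℝ) ≤ a / 4 - Real.log 2 / 2 := by nlinarith
    nlinarith [mul_nonneg h1 h2']
  calc μ {V | a < S V} ≤ _ := step1
    _ = _ := step3
    _ ≤ _ := final

lemma det_bound {d k m : ℕ} (hm : 0 < m) {a : ℝ}
    (V : Fin k → Fin m → ℝ) (hV : ∀ j, ∑ r, (V r j) ^ 2 ≤ a)
    (W : Matrix (Fin m) (Fin d) ℝ) (x : Fin d → ℝ) (hx : ∑ p, x p ^ 2 = 1) (y : Fin k → ℝ) :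
    (⨆ j : Fin m, ∑ p, netGrad V W x y j p ^ 2) ≤ 2 * netLoss V W x y * a := by
  haveI : Nonempty (Fin m) := ⟨⟨0, hm⟩⟩
  have hL : 0 ≤ netLoss V W x y := by
    apply mul_nonneg (by norm_num)
    exact Finset.sum_nonneg fun r _ => sq_nonneg _
  apply ciSup_le
  intro j
  set A : ℝ := ∑ r, (netOut V W x r - y r) * V r j with hA
  set b : ℝ := if 0 ≤ W.mulVec x j then 1 else 0 with hb
  have hb2 : b ^ 2 ≤ 1 := by rw [hb]; split <;> norm_num
  have hexp : ∀ p, netGrad V W x y j p = A * b * x p := fun p => rfl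
  have h1 : ∑ p, netGrad V W x y j p ^ 2 = A ^ 2 * b ^ 2 := by
    simp_rw [hexp, mul_pow]
    rw [← Finset.mul_sum, hx, mul_one]
  have h2 : A ^ 2 ≤ (∑ r, (netOut V W x r - y r) ^ 2) * (∑ r, (V r j) ^ 2) :=
    Finset.sum_mul_sq_le_sq_mul_sq _ _ _
  have h3 : (∑ r, (netOut V W x r - y r) ^ 2) = 2 * netLoss V W x y := by
    unfold netLoss; ring
  calc ∑ p, netGrad V W x y j p ^ 2 = A ^ 2 * b ^ 2 := h1
    _ ≤ A ^ 2 * 1 := by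
        exact mul_le_mul_of_nonneg_left hb2 (sq_nonneg A)
    _ = A ^ 2 := mul_one _
    _ ≤ (∑ r, (netOut V W x r - y r) ^ 2) * (∑ r, (V r j) ^ 2) := h2
    _ = 2 * netLoss V W x y * (∑ r, (V r j) ^ 2) := by rw [h3]
    _ ≤ 2 * netLoss V W x y * a := by
        apply mul_le_mul_of_nonneg_left (hV j)
        linarith

/-- There are absolute constants `C, C' > 0` such that for a random output matrix `V` with
i.i.d. `N(0, 1/k)` entries, with probability at least `1 − C'/m`, simultaneously for every
hidden matrix `W` and every training index `i`,
`‖∇_W ℓ(f_{V,W}(x_i), y_i)‖_{2,∞}² ≤ C · ℓ(f_{V,W}(x_i), y_i) · log m`. -/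
theorem netGrad_two_inf_bound :
    ∃ C C' : ℝ, 0 < C ∧ 0 < C' ∧
      ∀ (d k n m : ℕ), 0 < d → 0 < k → 0 < n → 2 ≤ m →
        ∀ (x : Fin n → Fin d → ℝ) (y : Fin n → Fin k → ℝ),
          (∀ i, ∑ p, x i p ^ 2 = 1) →
          1 - ENNReal.ofReal (C' / m) ≤
            (Measure.pi fun _ : Fin k => Measure.pi fun _ : Fin m =>
                gaussianReal 0 (1 / (k : ℝ≥0)))
              {V : Fin k → Fin m → ℝ |
                ∀ (W : Matrix (Fin m) (Fin d) ℝ) (i : Fin n),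
                  (⨆ j : Fin m, ∑ p, netGrad V W (x i) (y i) j p ^ 2)
                    ≤ C * netLoss V W (x i) (y i) * Real.log m} := by
  refine ⟨48, 1, by norm_num, by norm_num, ?_⟩
  intro d k n m hd hk hn hm x y hx
  set γ : Measure ℝ := gaussianReal 0 (1 / (k : ℝ≥0)) with hγ
  set μ := Measure.pi fun _ : Fin k => Measure.pi fun _ : Fin m => γ with hμ
  haveI : IsProbabilityMeasure μ := by rw [hμ]; infer_instance
  have hm0 : 0 < m := by omega
  have hm1 : (1 : ℝ) < m := by exact_mod_cast hm
  have hlog2 := Real.log_two_gt_d9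
  have hlogm : Real.log 2 ≤ Real.log m := Real.log_le_log (by norm_num) (by exact_mod_cast hm)
  have hlogpos : 0 < Real.log m := by linarith
  set a : ℝ := 24 * Real.log m with ha
  have ha4 : 4 ≤ a := by rw [ha]; nlinarith
  set G : Set (Fin k → Fin m → ℝ) := {V | ∀ j : Fin m, ∑ r, (V r j) ^ 2 ≤ a} with hG
  have hGmeas : MeasurableSet G := by
    have : G = ⋂ j : Fin m, {V : Fin k → Fin m → ℝ | ∑ r, (V r j) ^ 2 ≤ a} := by
      ext V; simp [hG, Set.mem_iInter]
    rw [this]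
    refine MeasurableSet.iInter fun j => measurableSet_le ?_ measurable_const
    exact Finset.measurable_sum _ fun r _ =>
      ((measurable_pi_apply j).comp (measurable_pi_apply r)).pow_const 2
  -- complement bound
  have hGc : μ Gᶜ ≤ ENNReal.ofReal (1 / m) := by
    have hsub : Gᶜ ⊆ ⋃ j : Fin m, {V : Fin k → Fin m → ℝ | a < ∑ r, (V r j) ^ 2} := by
      intro V hV
      simp only [hG, Set.mem_compl_iff, Set.mem_setOf_eq, not_forall, not_le] at hV
      obtain ⟨j, hj⟩ := hV
      exact Set.mem_iUnion.mpr ⟨j, hj⟩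
    have hexp3 : Real.exp (-a / 8) = ((m : ℝ) ^ 3)⁻¹ := by
      have h0 : -a / 8 = -(3 * Real.log m) := by rw [ha]; ring
      rw [h0, Real.exp_neg, show (3:ℝ) = ((3:ℕ):ℝ) from by norm_num, Real.exp_nat_mul,
        Real.exp_log (by positivity)]
    calc μ Gᶜ ≤ μ (⋃ j : Fin m, {V : Fin k → Fin m → ℝ | a < ∑ r, (V r j) ^ 2}) :=
          measure_mono hsub
      _ ≤ ∑ j : Fin m, μ {V : Fin k → Fin m → ℝ | a < ∑ r, (V r j) ^ 2} :=
          measure_iUnion_fintype_le μ _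
      _ ≤ ∑ _j : Fin m, ENNReal.ofReal (Real.exp (-a / 8)) :=
          Finset.sum_le_sum fun j _ => chernoff_col hk j ha4
      _ = m * ENNReal.ofReal (Real.exp (-a / 8)) := by
          rw [Finset.sum_const, Finset.card_univ, Fintype.card_fin, nsmul_eq_mul]
      _ ≤ ENNReal.ofReal (1 / m) := by
          rw [hexp3, ← ENNReal.ofReal_natCast m, ← ENNReal.ofReal_mul (by positivity)]
          apply ENNReal.ofReal_le_ofReal
          rw [div_eq_mul_inv, one_mul]
          have hmpos : (0:ℝ) < m := by positivity
          have he : (m:ℝ) * ((m:ℝ) ^ 3)⁻¹ = ((m:ℝ) ^ 2)⁻¹ := by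
            field_simp
          rw [he]
          exact inv_anti₀ hmpos (by nlinarith)
  -- deterministic inclusion
  have hGsub : G ⊆ {V : Fin k → Fin m → ℝ |
      ∀ (W : Matrix (Fin m) (Fin d) ℝ) (i : Fin n),
        (⨆ j : Fin m, ∑ p, netGrad V W (x i) (y i) j p ^ 2)
          ≤ 48 * netLoss V W (x i) (y i) * Real.log m} := by
    intro V hV W i
    have := det_bound hm0 V hV W (x i) (hx i) (y i)
    calc (⨆ j : Fin m, ∑ p, netGrad V W (x i) (y i) j p ^ 2)
        ≤ 2 * netLoss V W (x i) (y i) * a := this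
      _ = 48 * netLoss V W (x i) (y i) * Real.log m := by rw [ha]; ring
  calc (1 : ℝ≥0∞) - ENNReal.ofReal (1 / m) ≤ 1 - μ Gᶜ := tsub_le_tsub_left hGc 1
    _ ≤ μ G := by
        have hone : μ G + μ Gᶜ = 1 := by
          rw [measure_add_measure_compl hGmeas, measure_univ]
        rw [tsub_le_iff_right, ← hone]
    _ ≤ _ := measure_mono hGsub
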